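/- Let M be a compact metric space, e : ℕ → M an injective map with dense range, P a natural measure on M, and g : M → ℝ continuous; set v(n) = g(e(n)). Let F : ℝ → ℝ be a continuous function. Then the following are equivalent: (a) F is the asymptotic distribution function of v, i.e. for every real x the set {n : v(n) < x} has asymptotic density F(x); (b) F is the distribution function of the random variable g on (M, P), i.e. P({g < x}) = F(x) for every real x. -/

import Mathlib

open Filter MeasureTheory
open scoped Classical
set_option linter.unusedVariables false
set_option linter.unusedSectionVars false

/-- `E_N(𝟙_A) = |A ∩ [1,N]| / N`. -/
noncomputable def densSeq (A : Set ℕ) : ℕ → ℝ := fun N =>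
  (((Finset.Icc 1 N).filter (fun n => n ∈ A)).card : ℝ) / N

/-- `P` is a natural measure (w.r.t. the dense embedding `e : ℕ → M`) if the
sequence `(e(n))` is `P`-uniformly distributed in `M` and every nonempty open set
has positive measure. -/
def IsNaturalMeasure {M : Type*} [MetricSpace M] [MeasurableSpace M]
    (e : ℕ → M) (P : Measure M) : Prop :=
  (∀ f : M → ℝ, Continuous f →
    Tendsto (fun N : ℕ => (∑ n ∈ Finset.Icc 1 N, f (e n)) / N) atTop
      (nhds (∫ α, f α ∂P))) ∧
  (∀ U : Set M, IsOpen U → U.Nonempty → 0 < P U)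

/-- Let `g : M → ℝ` be continuous, `v(n) = g(e(n))`, `P` a natural measure and
`F : ℝ → ℝ` continuous. Then `F` is the asymptotic distribution function of `v`
(for every `x`, `{n | v(n) < x}` has asymptotic density `F(x)`) if and only if
`F` is the distribution function of the random variable `g` on `(M, P)`
(`P({g < x}) = F(x)` for every `x`). -/

lemma densSeq_eq (A : Set ℕ) (N : ℕ) :
    densSeq A N = (∑ n ∈ Finset.Icc 1 N, (if n ∈ A then (1:ℝ) else 0)) / N := by
  unfold densSeq
  rw [Finset.card_filter]
  push_cast
  rfl

section L
variable {M : Type*} [MetricSpace M] [CompactSpace M] [MeasurableSpace M] [BorelSpace M]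
  (P : Measure M) [IsProbabilityMeasure P] (g : M → ℝ) (hg : Continuous g) (x : ℝ)

lemma L1 : Tendsto (fun k : ℕ => (P {α | g α < x - 1/(k+1)}).toReal) atTop
    (nhds ((P {α | g α < x}).toReal)) := by
  have hmono : Monotone (fun k : ℕ => {α | g α < x - 1/(k+1)}) := by
    intro k l hkl α hα
    simp only [Set.mem_setOf_eq] at hα ⊢
    have h1 : (1:ℝ)/(l+1) ≤ 1/(k+1) :=
      one_div_le_one_div_of_le (by positivity) (by exact_mod_cast by omega)
    linarith
  have hU : (⋃ k : ℕ, {α | g α < x - 1/(k+1)}) = {α | g α < x} := by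
    ext α
    simp only [Set.mem_iUnion, Set.mem_setOf_eq]
    constructor
    · rintro ⟨k, hk⟩
      have : (0:ℝ) < 1/((k:ℝ)+1) := by positivity
      linarith
    · intro h
      obtain ⟨k, hk⟩ := exists_nat_one_div_lt (sub_pos.2 h)
      exact ⟨k, by linarith⟩
  have := tendsto_measure_iUnion_atTop (μ := P) hmono
  rw [hU] at this
  exact (ENNReal.tendsto_toReal (measure_ne_top P _)).comp this

include hg in
lemma L2 : Tendsto (fun k : ℕ => (P {α | g α < x + 1/(k+1)}).toReal) atTop
    (nhds ((P {α | g α ≤ x}).toReal)) := by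
  have hanti : Antitone (fun k : ℕ => {α | g α < x + 1/(k+1)}) := by
    intro k l hkl α hα
    simp only [Set.mem_setOf_eq] at hα ⊢
    have h1 : (1:ℝ)/(l+1) ≤ 1/(k+1) :=
      one_div_le_one_div_of_le (by positivity) (by exact_mod_cast by omega)
    linarith
  have hI : (⋂ k : ℕ, {α | g α < x + 1/(k+1)}) = {α | g α ≤ x} := by
    ext α
    simp only [Set.mem_iInter, Set.mem_setOf_eq]
    constructor
    · intro h
      by_contra hlt
      push_neg at hlt
      obtain ⟨k, hk⟩ := exists_nat_one_div_lt (sub_pos.2 hlt)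
      have := h k
      linarith
    · intro h k
      have : (0:ℝ) < 1/((k:ℝ)+1) := by positivity
      linarith
  have := tendsto_measure_iInter_atTop (μ := P)
    (fun k => ((isOpen_lt hg continuous_const).measurableSet).nullMeasurableSet)
    hanti ⟨0, measure_ne_top P _⟩
  rw [hI] at this
  exact (ENNReal.tendsto_toReal (measure_ne_top P _)).comp this

end L

section Core
variable {M : Type*} [MetricSpace M] [CompactSpace M] [MeasurableSpace M] [BorelSpace M]

lemma core (P : Measure M) [IsProbabilityMeasure P] (e : ℕ → M)
    (hP1 : ∀ f : M → ℝ, Continuous f →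
      Tendsto (fun N : ℕ => (∑ n ∈ Finset.Icc 1 N, f (e n)) / N) atTop
        (nhds (∫ α, f α ∂P)))
    (g : M → ℝ) (hg : Continuous g) (x : ℝ) (hx : P {α | g α = x} = 0) :
    Tendsto (densSeq {n : ℕ | g (e n) < x}) atTop
      (nhds ((P {α : M | g α < x}).toReal)) := by
  have hle : P {α | g α ≤ x} = P {α | g α < x} := by
    have hset : {α | g α ≤ x} = {α | g α < x} ∪ {α | g α = x} := by
      ext α; simp [le_iff_lt_or_eq]
    refine le_antisymm ?_ (measure_mono fun α (hα : g α < x) => le_of_lt hα)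
    calc P {α | g α ≤ x} ≤ P {α | g α < x} + P {α | g α = x} := hset ▸ measure_union_le _ _
      _ = P {α | g α < x} := by rw [hx, add_zero]
  rw [tendsto_order]
  constructor
  · -- lower bound
    intro a ha
    obtain ⟨k, hk⟩ := ((L1 P g x).eventually (eventually_gt_nhds ha)).exists
    set δ : ℝ := 1/((k:ℝ)+1) with hδdef
    have hδ : 0 < δ := by positivity
    set φ : M → ℝ := fun α => max 0 (min 1 ((x - g α)/δ)) with hφdef
    have hφc : Continuous φ := by fun_prop
    have hφ0 : ∀ α, 0 ≤ φ α := fun α => le_max_left _ _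
    have hφ1 : ∀ α, φ α ≤ 1 := fun α => max_le zero_le_one (min_le_left _ _)
    have hφeq1 : ∀ α, g α < x - δ → φ α = 1 := by
      intro α hα
      have h1 : (1:ℝ) ≤ (x - g α)/δ := (one_le_div hδ).2 (by linarith)
      simp [hφdef, min_eq_left h1]
    have hφeq0 : ∀ α, x ≤ g α → φ α = 0 := by
      intro α hα
      have h1 : (x - g α)/δ ≤ 0 := div_nonpos_iff.2 (Or.inr ⟨by linarith, le_of_lt hδ⟩)
      simp [hφdef, min_eq_right (h1.trans zero_le_one), max_eq_left h1]
    have hφint : Integrable φ P :=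
      hφc.integrable_of_hasCompactSupport (HasCompactSupport.of_compactSpace _)
    have hs : MeasurableSet {α | g α < x - δ} :=
      (isOpen_lt hg continuous_const).measurableSet
    have hIlb : (P {α | g α < x - δ}).toReal ≤ ∫ α, φ α ∂P := by
      rw [← Measure.real_def, ← integral_indicator_one hs]
      refine integral_mono ((integrable_const (1:ℝ)).indicator hs) hφint ?_
      intro α
      by_cases hα : α ∈ {α | g α < x - δ}
      · rw [Set.indicator_of_mem hα]
        simp only [Pi.one_apply]
        rw [hφeq1 α hα]
      · rw [Set.indicator_of_notMem hα]
        exact hφ0 α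
    have hLim := hP1 φ hφc
    have hev : ∀ᶠ N : ℕ in atTop, a < (∑ n ∈ Finset.Icc 1 N, φ (e n)) / N :=
      hLim.eventually (eventually_gt_nhds (lt_of_lt_of_le hk hIlb))
    filter_upwards [hev, eventually_ge_atTop 1] with N hN hN1
    refine lt_of_lt_of_le hN ?_
    rw [densSeq_eq]
    gcongr with n hn
    
    by_cases hn : n ∈ {n : ℕ | g (e n) < x}
    · simp only [hn, if_pos]
      exact hφ1 _
    · simp only [hn, if_neg, if_false]
      rw [hφeq0 _ (not_lt.1 hn)]
  · -- upper bound
    intro b hb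
    have hL2 : Tendsto (fun k : ℕ => (P {α | g α < x + 1/(k+1)}).toReal) atTop
        (nhds ((P {α | g α < x}).toReal)) := by
      have := L2 P g hg x
      rwa [hle] at this
    obtain ⟨k, hk⟩ := (hL2.eventually (eventually_lt_nhds hb)).exists
    set δ : ℝ := 1/((k:ℝ)+1) with hδdef
    have hδ : 0 < δ := by positivity
    set ψ : M → ℝ := fun α => max 0 (min 1 ((x + δ - g α)/δ)) with hψdef
    have hψc : Continuous ψ := by fun_prop
    have hψ0 : ∀ α, 0 ≤ ψ α := fun α => le_max_left _ _
    have hψeq1 : ∀ α, g α < x → ψ α = 1 := by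
      intro α hα
      have h1 : (1:ℝ) ≤ (x + δ - g α)/δ := (one_le_div hδ).2 (by linarith)
      simp [hψdef, min_eq_left h1]
    have hψeq0 : ∀ α, x + δ ≤ g α → ψ α = 0 := by
      intro α hα
      have h1 : (x + δ - g α)/δ ≤ 0 := div_nonpos_iff.2 (Or.inr ⟨by linarith, le_of_lt hδ⟩)
      simp [hψdef, min_eq_right (h1.trans zero_le_one), max_eq_left h1]
    have hψle : ∀ α, ψ α ≤ Set.indicator {α | g α < x + δ} (1 : M → ℝ) α := by
      intro α
      by_cases hα : α ∈ {α | g α < x + δ}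
      · rw [Set.indicator_of_mem hα]
        exact max_le zero_le_one (min_le_left _ _)
      · rw [Set.indicator_of_notMem hα]
        rw [hψeq0 _ (not_lt.1 hα)]
    have hψint : Integrable ψ P :=
      hψc.integrable_of_hasCompactSupport (HasCompactSupport.of_compactSpace _)
    have hs : MeasurableSet {α | g α < x + δ} :=
      (isOpen_lt hg continuous_const).measurableSet
    have hIub : ∫ α, ψ α ∂P ≤ (P {α | g α < x + δ}).toReal := by
      rw [← Measure.real_def, ← integral_indicator_one hs]
      exact integral_mono hψint ((integrable_const (1:ℝ)).indicator hs) hψle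
    have hev : ∀ᶠ N : ℕ in atTop, (∑ n ∈ Finset.Icc 1 N, ψ (e n)) / N < b :=
      (hP1 ψ hψc).eventually (eventually_lt_nhds (lt_of_le_of_lt hIub hk))
    filter_upwards [hev, eventually_ge_atTop 1] with N hN hN1
    refine lt_of_le_of_lt ?_ hN
    rw [densSeq_eq]
    gcongr with n hn
    
    by_cases hn : n ∈ {n : ℕ | g (e n) < x}
    · simp only [hn, if_pos]
      rw [hψeq1 _ hn]
    · simp only [hn, if_neg, if_false]
      exact hψ0 _

end Core

theorem stmt12 {M : Type*} [MetricSpace M] [CompactSpace M]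
    [MeasurableSpace M] [BorelSpace M]
    (P : Measure M) [IsProbabilityMeasure P]
    (e : ℕ → M) (he : Function.Injective e) (hd : DenseRange e)
    (hP : IsNaturalMeasure e P)
    (g : M → ℝ) (hg : Continuous g) (F : ℝ → ℝ) (hF : Continuous F) :
    (∀ x : ℝ, Tendsto (densSeq {n : ℕ | g (e n) < x}) atTop (nhds (F x))) ↔
      (∀ x : ℝ, (P {α : M | g α < x}).toReal = F x) := by
  obtain ⟨hP1, _⟩ := hP
  constructor
  · -- (a) → (b)
    intro ha x
    set Dbad : Set ℝ := {t : ℝ | 0 < P {α : M | g α = t}} with hDdef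
    have hDcount : Dbad.Countable :=
      Measure.countable_meas_level_set_pos hg.measurable
    have heq : ∀ y : ℝ, y ∉ Dbad → (P {α : M | g α < y}).toReal = F y := by
      intro y hy
      have hy0 : P {α : M | g α = y} = 0 := by
        by_contra h
        exact hy (pos_iff_ne_zero.2 h)
      exact tendsto_nhds_unique (core P e hP1 g hg y hy0) (ha y)
    have hsel : ∀ k : ℕ, ∃ y : ℝ, y ∈ Set.Ioo (x - 1/((k:ℝ)+1)) x ∧ y ∉ Dbad := by
      intro k
      by_contra h
      push_neg at h
      have hsub : Set.Ioo (x - 1/((k:ℝ)+1)) x ⊆ Dbad := fun y hy => h y hy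
      have h0 := (hDcount.mono hsub).measure_zero (volume)
      rw [Real.volume_Ioo] at h0
      have hδ : (0:ℝ) < 1/((k:ℝ)+1) := by positivity
      rw [ENNReal.ofReal_eq_zero] at h0
      linarith
    choose y hy1 hy2 using hsel
    have hyx : ∀ k, y k < x := fun k => (hy1 k).2
    have hylim : Tendsto y atTop (nhds x) := by
      have hlow : Tendsto (fun k : ℕ => x - 1/((k:ℝ)+1)) atTop (nhds x) := by
        have := tendsto_const_nhds (x := x) (f := atTop (α := ℕ)) |>.sub
          tendsto_one_div_add_atTop_nhds_zero_nat
        simpa using this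
      exact tendsto_of_tendsto_of_tendsto_of_le_of_le hlow tendsto_const_nhds
        (fun k => le_of_lt (hy1 k).1) (fun k => le_of_lt (hyx k))
    have hFy : Tendsto (fun k => F (y k)) atTop (nhds (F x)) := (hF.tendsto x).comp hylim
    have h1 : F x ≤ (P {α : M | g α < x}).toReal := by
      refine le_of_tendsto hFy (Eventually.of_forall fun k => ?_)
      rw [← heq (y k) (hy2 k)]
      exact ENNReal.toReal_mono (measure_ne_top _ _)
        (measure_mono fun α (hα : g α < y k) => lt_trans hα (hyx k))
    have h2 : (P {α : M | g α < x}).toReal ≤ F x := by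
      refine le_of_tendsto_of_tendsto' (L1 P g x) hFy (fun k => ?_)
      rw [← heq (y k) (hy2 k)]
      exact ENNReal.toReal_mono (measure_ne_top _ _)
        (measure_mono fun α (hα : g α < x - 1/((k:ℝ)+1)) => lt_trans hα (hy1 k).1)
    linarith
  · -- (b) → (a)
    intro hb x
    have hFlim : Tendsto (fun k : ℕ => F (x + 1/((k:ℝ)+1))) atTop (nhds (F x)) := by
      refine (hF.tendsto x).comp ?_
      have := tendsto_const_nhds (x := x) (f := atTop (α := ℕ)) |>.add
        tendsto_one_div_add_atTop_nhds_zero_nat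
      simpa using this
    have hle : (P {α : M | g α ≤ x}).toReal = F x := by
      refine tendsto_nhds_unique ?_ hFlim
      have := L2 P g hg x
      simp_rw [fun k : ℕ => hb (x + 1/((k:ℝ)+1))] at this
      exact this
    have hlt := hb x
    have hmeaseq : P {α : M | g α ≤ x} = P {α : M | g α < x} := by
      refine (ENNReal.toReal_eq_toReal_iff' (measure_ne_top _ _) (measure_ne_top _ _)).1 ?_
      rw [hle, hlt]
    have hx0 : P {α : M | g α = x} = 0 := by
      have hsub : {α : M | g α = x} ⊆ {α : M | g α ≤ x} \ {α : M | g α < x} :=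
        fun α (hα : g α = x) => ⟨le_of_eq hα, fun (h : g α < x) => absurd hα (ne_of_lt h)⟩
      have hdiff : P ({α : M | g α ≤ x} \ {α : M | g α < x}) = 0 := by
        have hd2 := measure_diff (μ := P) (s₁ := {α : M | g α ≤ x}) (s₂ := {α : M | g α < x})
          (fun α (hα : g α < x) => le_of_lt hα)
          ((isOpen_lt hg continuous_const).measurableSet).nullMeasurableSet
          (measure_ne_top _ _)
        rw [hd2, hmeaseq, tsub_self]
      exact le_antisymm ((measure_mono hsub).trans hdiff.le) zero_le
    have := core P e hP1 g hg x hx0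
    rwa [hlt] at this
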